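/- Fix a < 0. As η → ∞, the projected flux matrices converge to the equilibrium splitting: A·P(η)⁻¹·diag(1,0)·P(η) → [[0,0],[1,−1/a]] and A·P(η)⁻¹·diag(0,1)·P(η) → [[0,1],[0,1/a]]. -/

import Mathlib

noncomputable def Mmat (a η : ℝ) : Matrix (Fin 2) (Fin 2) ℝ :=
  !![-η * a, 1 + η; 1, 0]

noncomputable def lamP (a η : ℝ) : ℝ :=
  (-(a * η) + Real.sqrt (a ^ 2 * η ^ 2 + 4 * (η + 1))) / 2

noncomputable def lamM (a η : ℝ) : ℝ :=
  (-(a * η) - Real.sqrt (a ^ 2 * η ^ 2 + 4 * (η + 1))) / 2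

noncomputable def Lp (a η : ℝ) : Fin 2 → ℝ :=
  (Real.sqrt ((1 + η) ^ 2 + lamP a η ^ 2))⁻¹ • ![lamP a η, 1 + η]

noncomputable def Lm (a η : ℝ) : Fin 2 → ℝ :=
  (Real.sqrt ((1 + η) ^ 2 + lamM a η ^ 2))⁻¹ • ![lamM a η, 1 + η]

noncomputable def eucNorm (v : Fin 2 → ℝ) : ℝ :=
  Real.sqrt (v 0 ^ 2 + v 1 ^ 2)

noncomputable def Pmat (a η : ℝ) : Matrix (Fin 2) (Fin 2) ℝ :=
  Matrix.of ![Lp a η, Lm a η]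

def Amat : Matrix (Fin 2) (Fin 2) ℝ := !![0, 1; 1, 0]

open Filter Matrix

noncomputable def qf (a x : ℝ) : ℝ := Real.sqrt (a^2 + 4*x + 4*x^2)

noncomputable def F1 (a x : ℝ) : Matrix (Fin 2) (Fin 2) ℝ :=
  !![x / qf a x, (a + qf a x)/(2 * qf a x);
     (-a + qf a x)/(2 * qf a x), (x + 1) / qf a x]

noncomputable def F2 (a x : ℝ) : Matrix (Fin 2) (Fin 2) ℝ :=
  !![-(x / qf a x), (-a + qf a x)/(2 * qf a x);
     (a + qf a x)/(2 * qf a x), -((x + 1) / qf a x)]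

lemma Pmat_eq (a η : ℝ) :
    Pmat a η = !![(Real.sqrt ((1+η)^2 + lamP a η^2))⁻¹ * lamP a η,
                  (Real.sqrt ((1+η)^2 + lamP a η^2))⁻¹ * (1+η);
                  (Real.sqrt ((1+η)^2 + lamM a η^2))⁻¹ * lamM a η,
                  (Real.sqrt ((1+η)^2 + lamM a η^2))⁻¹ * (1+η)] := by
  ext i j
  fin_cases i <;> fin_cases j <;> simp [Pmat, Lp, Lm]

set_option maxHeartbeats 1000000 in
lemma core (a : ℝ) (ha : a < 0) (η : ℝ) (hη : 0 < η) :
    Amat * (Pmat a η)⁻¹ * !![(1:ℝ),0;0,0] * Pmat a η =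
      (Real.sqrt (a^2*η^2 + 4*(η+1)))⁻¹ • !![1, (a*η + Real.sqrt (a^2*η^2 + 4*(η+1)))/2;
        (-(a*η) + Real.sqrt (a^2*η^2 + 4*(η+1)))/2, 1+η] ∧
    Amat * (Pmat a η)⁻¹ * !![(0:ℝ),0;0,1] * Pmat a η =
      (Real.sqrt (a^2*η^2 + 4*(η+1)))⁻¹ • !![-1, (-(a*η) + Real.sqrt (a^2*η^2 + 4*(η+1)))/2;
        (a*η + Real.sqrt (a^2*η^2 + 4*(η+1)))/2, -(1+η)] := by
  set s := Real.sqrt (a^2*η^2 + 4*(η+1)) with hsdef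
  have harg : (0:ℝ) < a^2*η^2 + 4*(η+1) := by nlinarith [sq_nonneg (a*η)]
  have hs2 : s^2 = a^2*η^2 + 4*(η+1) := Real.sq_sqrt harg.le
  have hspos : 0 < s := Real.sqrt_pos.2 harg
  have hm : (0:ℝ) < 1+η := by linarith
  have hlp : lamP a η = (-(a*η) + s)/2 := by rw [lamP]
  have hlm : lamM a η = (-(a*η) - s)/2 := by rw [lamM]
  set np := Real.sqrt ((1+η)^2 + lamP a η^2) with hnpdef
  set nm := Real.sqrt ((1+η)^2 + lamM a η^2) with hnmdef
  have hnppos : 0 < np := Real.sqrt_pos.2 (by nlinarith [sq_nonneg (lamP a η)])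
  have hnmpos : 0 < nm := Real.sqrt_pos.2 (by nlinarith [sq_nonneg (lamM a η)])
  have hP : Pmat a η = !![np⁻¹ * lamP a η, np⁻¹*(1+η); nm⁻¹*lamM a η, nm⁻¹*(1+η)] :=
    Pmat_eq a η
  have hQ : (Pmat a η)⁻¹ = ((1+η)*s)⁻¹ •
      !![(1+η)*np, -((1+η)*nm); -(lamM a η * np), lamP a η * nm] := by
    apply Matrix.inv_eq_right_inv
    rw [hP, Matrix.mul_smul]
    ext i j
    fin_cases i <;> fin_cases j <;>
      simp [Matrix.smul_apply, Matrix.mul_apply, Fin.sum_univ_two, Matrix.one_apply,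
        hlp, hlm] <;>
      (try field_simp) <;> (try ring) <;> tauto
  clear_value s np nm
  have hA : Amat = !![(0:ℝ),1;1,0] := rfl
  constructor <;>
  · rw [hQ, hP, hA, Matrix.mul_smul, Matrix.smul_mul, Matrix.smul_mul,
      Matrix.mul_fin_two, Matrix.mul_fin_two, Matrix.mul_fin_two]
    ext i j
    fin_cases i <;> fin_cases j <;>
    · simp only [Matrix.smul_apply, Fin.zero_eta, Fin.mk_one, Matrix.cons_val', Matrix.cons_val_zero,
        Matrix.cons_val_one, Matrix.head_cons, Matrix.empty_val',
        Matrix.cons_val_fin_one, smul_eq_mul, Matrix.of_apply, Matrix.head_fin_const]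
      rw [hlp, hlm]
      field_simp
      try ring
      try linear_combination (s*np)*hs2
      try linear_combination (-(s*nm))*hs2
      try linear_combination (nm*np)*hs2
      try linear_combination (-(nm*np))*hs2

lemma key (a : ℝ) (ha : a < 0) (η : ℝ) (hη : 0 < η) :
    Amat * (Pmat a η)⁻¹ * !![(1:ℝ),0;0,0] * Pmat a η = F1 a (1/η) ∧
    Amat * (Pmat a η)⁻¹ * !![(0:ℝ),0;0,1] * Pmat a η = F2 a (1/η) := by
  obtain ⟨h1, h2⟩ := core a ha η hη
  set s := Real.sqrt (a^2*η^2 + 4*(η+1)) with hsdef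
  set q := qf a (1/η) with hqdef
  have hq : 0 < q := by
    have h1 : 0 < 1/η := by positivity
    exact Real.sqrt_pos.2 (by nlinarith [sq_nonneg a, sq_nonneg (1/η)])
  have hsq : s = η * q := by
    rw [hsdef, hqdef, qf, show a^2*η^2+4*(η+1) = η^2 * (a^2 + 4*(1/η) + 4*(1/η)^2) by
      field_simp; ring]
    rw [Real.sqrt_mul (sq_nonneg η), Real.sqrt_sq hη.le]
  constructor
  · rw [h1]
    ext i j
    fin_cases i <;> fin_cases j <;>
    · simp only [F1, ← hqdef, Matrix.smul_apply, Fin.zero_eta, Fin.mk_one, Matrix.cons_val', Matrix.cons_val_zero,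
        Matrix.cons_val_one, Matrix.head_cons, Matrix.empty_val',
        Matrix.cons_val_fin_one, smul_eq_mul, Matrix.of_apply, Matrix.head_fin_const]
      rw [hsq]
      try field_simp
      try ring
  · rw [h2]
    ext i j
    fin_cases i <;> fin_cases j <;>
    · simp only [F2, ← hqdef, Matrix.smul_apply, Fin.zero_eta, Fin.mk_one, Matrix.cons_val', Matrix.cons_val_zero,
        Matrix.cons_val_one, Matrix.head_cons, Matrix.empty_val',
        Matrix.cons_val_fin_one, smul_eq_mul, Matrix.of_apply, Matrix.head_fin_const]
      rw [hsq]
      try field_simp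
      try ring

lemma tendsto_mat {f : ℝ → Matrix (Fin 2) (Fin 2) ℝ} {l : Filter ℝ} {L : Matrix (Fin 2) (Fin 2) ℝ}
    (h : ∀ i j, Filter.Tendsto (fun x => f x i j) l (nhds (L i j))) :
    Filter.Tendsto f l (nhds L) :=
  tendsto_pi_nhds.2 fun i => tendsto_pi_nhds.2 (h i)

lemma qf_cont (a : ℝ) : Continuous (qf a) :=
  Real.continuous_sqrt.comp (by continuity)

lemma qf_zero (a : ℝ) (ha : a < 0) : qf a 0 = -a := by
  simp [qf]
  rw [Real.sqrt_sq_eq_abs, abs_of_neg ha]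

lemma F1_lim (a : ℝ) (ha : a < 0) :
    Filter.Tendsto (F1 a) (nhds 0) (nhds !![(0:ℝ), 0; 1, -1 / a]) := by
  have hne : qf a 0 ≠ 0 := by rw [qf_zero a ha]; linarith
  apply tendsto_mat
  intro i j
  fin_cases i <;> fin_cases j <;>
    simp only [F1, Fin.zero_eta, Fin.mk_one, Matrix.cons_val', Matrix.cons_val_zero,
      Matrix.cons_val_one, Matrix.head_cons, Matrix.empty_val', Matrix.cons_val_fin_one,
      Matrix.of_apply, Matrix.head_fin_const]
  · have h : ContinuousAt (fun x : ℝ => x / qf a x) 0 :=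
      ContinuousAt.div continuousAt_id (qf_cont a).continuousAt hne
    convert h.tendsto using 2
    simp
  · have h : ContinuousAt (fun x : ℝ => (a + qf a x)/(2 * qf a x)) 0 :=
      ContinuousAt.div (continuous_const.add (qf_cont a)).continuousAt
        (continuous_const.mul (qf_cont a)).continuousAt (by simpa using hne)
    convert h.tendsto using 2
    rw [qf_zero a ha]; simp
  · have h : ContinuousAt (fun x : ℝ => (-a + qf a x)/(2 * qf a x)) 0 :=
      ContinuousAt.div (continuous_const.add (qf_cont a)).continuousAt
        (continuous_const.mul (qf_cont a)).continuousAt (by simpa using hne)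
    convert h.tendsto using 2
    rw [qf_zero a ha]; field_simp [ha.ne]; try ring
  · have h : ContinuousAt (fun x : ℝ => (x + 1) / qf a x) 0 :=
      ContinuousAt.div (continuous_id.add continuous_const).continuousAt
        (qf_cont a).continuousAt hne
    convert h.tendsto using 2
    rw [qf_zero a ha]; field_simp [ha.ne]; try ring

lemma F2_lim (a : ℝ) (ha : a < 0) :
    Filter.Tendsto (F2 a) (nhds 0) (nhds !![(0:ℝ), 1; 0, 1 / a]) := by
  have hne : qf a 0 ≠ 0 := by rw [qf_zero a ha]; linarith
  apply tendsto_mat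
  intro i j
  fin_cases i <;> fin_cases j <;>
    simp only [F2, Fin.zero_eta, Fin.mk_one, Matrix.cons_val', Matrix.cons_val_zero,
      Matrix.cons_val_one, Matrix.head_cons, Matrix.empty_val', Matrix.cons_val_fin_one,
      Matrix.of_apply, Matrix.head_fin_const]
  · have h : ContinuousAt (fun x : ℝ => -(x / qf a x)) 0 :=
      (ContinuousAt.div continuousAt_id (qf_cont a).continuousAt hne).neg
    convert h.tendsto using 2
    simp
  · have h : ContinuousAt (fun x : ℝ => (-a + qf a x)/(2 * qf a x)) 0 :=
      ContinuousAt.div (continuous_const.add (qf_cont a)).continuousAt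
        (continuous_const.mul (qf_cont a)).continuousAt (by simpa using hne)
    convert h.tendsto using 2
    rw [qf_zero a ha]; field_simp [ha.ne]; try ring
  · have h : ContinuousAt (fun x : ℝ => (a + qf a x)/(2 * qf a x)) 0 :=
      ContinuousAt.div (continuous_const.add (qf_cont a)).continuousAt
        (continuous_const.mul (qf_cont a)).continuousAt (by simpa using hne)
    convert h.tendsto using 2
    rw [qf_zero a ha]; simp
  · have h : ContinuousAt (fun x : ℝ => -((x + 1) / qf a x)) 0 :=
      (ContinuousAt.div (continuous_id.add continuous_const).continuousAt
        (qf_cont a).continuousAt hne).neg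
    convert h.tendsto using 2
    rw [qf_zero a ha]; field_simp [ha.ne]; try ring

theorem stmt11 (a : ℝ) (ha : a < 0) :
    Filter.Tendsto (fun η => Amat * (Pmat a η)⁻¹ * !![(1:ℝ), 0; 0, 0] * Pmat a η)
      Filter.atTop (nhds !![(0:ℝ), 0; 1, -1 / a]) ∧
    Filter.Tendsto (fun η => Amat * (Pmat a η)⁻¹ * !![(0:ℝ), 0; 0, 1] * Pmat a η)
      Filter.atTop (nhds !![(0:ℝ), 1; 0, 1 / a]) := by
  have hz : Filter.Tendsto (fun η : ℝ => 1/η) atTop (nhds 0) := by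
    simpa [one_div] using tendsto_inv_atTop_zero
  constructor
  · refine Filter.Tendsto.congr' ?_ ((F1_lim a ha).comp hz)
    filter_upwards [eventually_gt_atTop 0] with η hη
    exact ((key a ha η hη).1).symm
  · refine Filter.Tendsto.congr' ?_ ((F2_lim a ha).comp hz)
    filter_upwards [eventually_gt_atTop 0] with η hη
    exact ((key a ha η hη).2).symm
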